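/- Let G be a finite group and n, k positive integers. Define two elements of G to be in the same 'tribe' if their k-th powers are equal. Then the sum over all tribes T of |T|^n is divisible by |G|. -/

import Mathlib

namespace Stmt7

open PresentedGroup

variable {G : Type*} [Group G]

section Defs

variable (n k : ℕ)

def rels : Set (FreeGroup (Fin (n + 1))) :=
  Set.range fun p : Fin (n + 1) × Fin (n + 1) =>
    (FreeGroup.of p.1) ^ k * ((FreeGroup.of p.2) ^ k)⁻¹

abbrev Gam := PresentedGroup (rels n k)

lemma of_pow_eq (i j : Fin (n + 1)) : (of i : Gam n k) ^ k = (of j : Gam n k) ^ k := by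
  have h : FreeGroup.of i ^ k * (FreeGroup.of j ^ k)⁻¹ ∈ Subgroup.normalClosure (rels n k) :=
    Subgroup.subset_normalClosure ⟨(i, j), rfl⟩
  have h2 : mk (rels n k) (FreeGroup.of i ^ k * (FreeGroup.of j ^ k)⁻¹) = 1 :=
    (QuotientGroup.eq_one_iff _).2 h
  rw [map_mul, map_inv, map_pow, map_pow] at h2
  exact mul_inv_eq_one.mp h2

def psi : Gam n k →* Multiplicative ℤ :=
  toGroup (f := fun _ => Multiplicative.ofAdd (1 : ℤ)) (by
    rintro r ⟨⟨i, j⟩, rfl⟩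
    rw [map_mul, map_inv, map_pow, map_pow, FreeGroup.lift_apply_of, FreeGroup.lift_apply_of,
      mul_inv_cancel])

def uu : Gam n k := of 0

/-- additive version of `psi`. -/
def mm (x : Gam n k) : ℤ := Multiplicative.toAdd (psi n k x)

lemma mm_mul (x y : Gam n k) : mm n k (x * y) = mm n k x + mm n k y := by
  simp [mm, map_mul]

lemma mm_one : mm n k 1 = 0 := by simp [mm]

lemma mm_uu : mm n k (uu n k) = 1 := by
  simp [mm, uu, psi, toGroup.of]

lemma mm_zpow (x : Gam n k) (a : ℤ) : mm n k (x ^ a) = a * mm n k x := by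
  simp [mm, map_zpow]

def KK : Subgroup (Gam n k) := (psi n k).ker

lemma mem_KK_iff (x : Gam n k) : x ∈ KK n k ↔ mm n k x = 0 := by
  rw [KK, MonoidHom.mem_ker, mm]
  constructor
  · intro h; rw [h]; rfl
  · intro h
    have : Multiplicative.ofAdd (Multiplicative.toAdd (psi n k x)) = Multiplicative.ofAdd 0 := by
      rw [h]
    simpa using this

end Defs

section Work

variable {n k : ℕ}

lemma conj_mem_KK (a : ℤ) {x : Gam n k} (hx : x ∈ KK n k) :
    uu n k ^ a * x * (uu n k) ^ (-a) ∈ KK n k := by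
  rw [mem_KK_iff] at hx ⊢
  rw [mm_mul, mm_mul, mm_zpow, mm_zpow, mm_uu, hx]
  ring

/-- conjugation by `uu` as a map on `KK`. -/
def tw (κ : ↥(KK n k)) : ↥(KK n k) :=
  ⟨uu n k * κ * (uu n k)⁻¹, by
    have := conj_mem_KK (n := n) (k := k) 1 κ.2
    simpa using this⟩

/-- compatibility of `(φ, t)`: `φ` intertwines conjugation by `uu` with conjugation by `t`. -/
def Compat (φ : ↥(KK n k) →* G) (t : G) : Prop :=
  ∀ κ : ↥(KK n k), φ (tw κ) = t * φ κ * t⁻¹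

lemma phi_eq (φ : ↥(KK n k) →* G) {x y : Gam n k} (h : x = y) (hx : x ∈ KK n k)
    (hy : y ∈ KK n k) : φ ⟨x, hx⟩ = φ ⟨y, hy⟩ := by
  subst h; rfl

lemma phi_mul (φ : ↥(KK n k) →* G) {x y : Gam n k} (hx : x ∈ KK n k) (hy : y ∈ KK n k)
    (hxy : x * y ∈ KK n k) : φ ⟨x * y, hxy⟩ = φ ⟨x, hx⟩ * φ ⟨y, hy⟩ := by
  rw [← map_mul]
  exact phi_eq φ rfl _ _

lemma compat_zpow {φ : ↥(KK n k) →* G} {t : G} (h : Compat φ t) :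
    ∀ (a : ℤ) {x : Gam n k} (hx : x ∈ KK n k),
      φ ⟨uu n k ^ a * x * uu n k ^ (-a), conj_mem_KK a hx⟩ = t ^ a * φ ⟨x, hx⟩ * t ^ (-a) := by
  have hneg : ∀ {x : Gam n k} (hx : x ∈ KK n k),
      φ ⟨(uu n k)⁻¹ * x * uu n k, by simpa using conj_mem_KK (-1) hx⟩
        = t⁻¹ * φ ⟨x, hx⟩ * t := by
    intro x hx
    have hx' : (uu n k)⁻¹ * x * uu n k ∈ KK n k := by simpa using conj_mem_KK (-1) hx
    have := h ⟨(uu n k)⁻¹ * x * uu n k, hx'⟩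
    have htw : tw (⟨(uu n k)⁻¹ * x * uu n k, hx'⟩ : ↥(KK n k)) = ⟨x, hx⟩ := by
      apply Subtype.ext
      show uu n k * ((uu n k)⁻¹ * x * uu n k) * (uu n k)⁻¹ = x
      group
    rw [htw] at this
    rw [this]
    group
  intro a
  induction a using Int.induction_on with
  | zero => intro x hx; simp [phi_eq φ (show (uu n k) ^ (0:ℤ) * x * (uu n k) ^ (-(0:ℤ)) = x by group) _ hx]
  | succ a ih =>
    intro x hx
    have hinner : uu n k ^ (a : ℤ) * x * uu n k ^ (-(a : ℤ)) ∈ KK n k := conj_mem_KK a hx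
    have key : uu n k ^ ((a : ℤ) + 1) * x * uu n k ^ (-((a : ℤ) + 1))
        = uu n k * (uu n k ^ (a : ℤ) * x * uu n k ^ (-(a : ℤ))) * (uu n k)⁻¹ := by
      group
    have e1 : φ ⟨uu n k ^ ((a : ℤ) + 1) * x * uu n k ^ (-((a : ℤ) + 1)), conj_mem_KK _ hx⟩
        = φ (tw ⟨_, hinner⟩) := by
      apply phi_eq φ key
    rw [e1, h, ih hx]
    group
  | pred a ih =>
    intro x hx
    have hinner : uu n k ^ (-(a : ℤ)) * x * uu n k ^ (-(-(a : ℤ))) ∈ KK n k := conj_mem_KK _ hx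
    have key : uu n k ^ (-(a : ℤ) - 1) * x * uu n k ^ (-(-(a : ℤ) - 1))
        = (uu n k)⁻¹ * (uu n k ^ (-(a : ℤ)) * x * uu n k ^ (-(-(a : ℤ)))) * uu n k := by
      group
    have e1 : φ ⟨uu n k ^ (-(a : ℤ) - 1) * x * uu n k ^ (-(-(a : ℤ) - 1)), conj_mem_KK _ hx⟩
        = φ ⟨(uu n k)⁻¹ * (uu n k ^ (-(a : ℤ)) * x * uu n k ^ (-(-(a : ℤ)))) * uu n k, by
            simpa using conj_mem_KK (-1) hinner⟩ := phi_eq φ key _ _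
    rw [e1, hneg hinner, ih hx]
    group

lemma mem_KK_aux (γ : Gam n k) : γ * uu n k ^ (-(mm n k γ)) ∈ KK n k := by
  rw [mem_KK_iff, mm_mul, mm_zpow, mm_uu]
  ring

/-- reconstruct a homomorphism `Gam n k →* G` from compatible `(φ, t)`. -/
def buildHom (φ : ↥(KK n k) →* G) (t : G) (h : Compat φ t) : Gam n k →* G where
  toFun γ := φ ⟨γ * uu n k ^ (-(mm n k γ)), mem_KK_aux γ⟩ * t ^ (mm n k γ)
  map_one' := by
    have h0 : mm n k (1 : Gam n k) = 0 := mm_one n k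
    have hone : (⟨(1 : Gam n k), (KK n k).one_mem⟩ : ↥(KK n k)) = 1 := rfl
    have e : φ ⟨(1 : Gam n k) * uu n k ^ (-(mm n k (1 : Gam n k))), mem_KK_aux 1⟩
        = φ ⟨(1 : Gam n k), (KK n k).one_mem⟩ := by
      apply phi_eq
      rw [h0]; group
    rw [e, hone, map_one, h0]
    simp
  map_mul' γ δ := by
    have hab : mm n k (γ * δ) = mm n k γ + mm n k δ := mm_mul n k γ δ
    set a := mm n k γ with ha
    set b := mm n k δ with hb
    have key : γ * δ * uu n k ^ (-(mm n k (γ * δ)))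
        = (γ * uu n k ^ (-a)) * (uu n k ^ a * (δ * uu n k ^ (-b)) * uu n k ^ (-a)) := by
      rw [hab]; group
    have e1 : φ ⟨γ * δ * uu n k ^ (-(mm n k (γ * δ))), mem_KK_aux (γ * δ)⟩
        = φ ⟨(γ * uu n k ^ (-a)) * (uu n k ^ a * (δ * uu n k ^ (-b)) * uu n k ^ (-a)),
            Subgroup.mul_mem _ (mem_KK_aux γ) (conj_mem_KK a (mem_KK_aux δ))⟩ :=
      phi_eq φ key _ _
    rw [e1, phi_mul φ (mem_KK_aux γ) (conj_mem_KK a (mem_KK_aux δ)) _,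
      compat_zpow h a (mem_KK_aux δ), hab]
    group
    rfl

/-- the type of compatible pairs. -/
def PP (n k : ℕ) (G : Type*) [Group G] : Type _ :=
  {p : (↥(KK n k) →* G) × G // Compat p.1 p.2}

/-- `Hom(Γ, G)` is equivalent to the set of compatible pairs. -/
noncomputable def e2 : (Gam n k →* G) ≃ PP n k G where
  toFun ρ := ⟨(ρ.comp (KK n k).subtype, ρ (uu n k)), by
    intro κ
    show ρ (uu n k * κ * (uu n k)⁻¹) = _
    simp [map_mul]⟩
  invFun p := buildHom p.1.1 p.1.2 p.2
  left_inv ρ := by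
    refine MonoidHom.ext fun γ => ?_
    show ρ.comp (KK n k).subtype ⟨γ * uu n k ^ (-(mm n k γ)), _⟩ * ρ (uu n k) ^ (mm n k γ) = ρ γ
    show ρ (γ * uu n k ^ (-(mm n k γ))) * ρ (uu n k) ^ (mm n k γ) = ρ γ
    rw [map_mul, map_zpow]
    group
  right_inv p := by
    apply Subtype.ext
    apply Prod.ext
    · ext κ
      show buildHom p.1.1 p.1.2 p.2 ((KK n k).subtype κ) = p.1.1 κ
      show p.1.1 ⟨(κ : Gam n k) * uu n k ^ (-(mm n k (κ : Gam n k))), _⟩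
          * p.1.2 ^ (mm n k (κ : Gam n k)) = p.1.1 κ
      have h0 : mm n k (κ : Gam n k) = 0 := (mem_KK_iff n k _).1 κ.2
      have e : p.1.1 ⟨(κ : Gam n k) * uu n k ^ (-(mm n k (κ : Gam n k))), mem_KK_aux _⟩
          = p.1.1 ⟨(κ : Gam n k), κ.2⟩ := by
        apply phi_eq
        rw [h0]; group
      rw [e, h0]
      simp
    · show buildHom p.1.1 p.1.2 p.2 (uu n k) = p.1.2
      show p.1.1 ⟨uu n k * uu n k ^ (-(mm n k (uu n k))), _⟩ * p.1.2 ^ (mm n k (uu n k)) = p.1.2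
      have h1 : mm n k (uu n k) = 1 := mm_uu n k
      have e : p.1.1 ⟨uu n k * uu n k ^ (-(mm n k (uu n k))), mem_KK_aux _⟩
          = p.1.1 ⟨1, (KK n k).one_mem⟩ := by
        apply phi_eq
        rw [h1]; group
      have hone : (⟨(1 : Gam n k), (KK n k).one_mem⟩ : ↥(KK n k)) = 1 := rfl
      rw [e, hone, map_one, h1]
      simp

/-- twistable homomorphisms. -/
def XX (n k : ℕ) (G : Type*) [Group G] : Type _ :=
  {φ : ↥(KK n k) →* G // ∃ t : G, Compat φ t}

noncomputable instance : MulAction G (XX n k G) where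
  smul g x := ⟨((MulAut.conj g).toMonoidHom.comp x.1), by
    obtain ⟨t, ht⟩ := x.2
    refine ⟨g * t * g⁻¹, fun κ => ?_⟩
    have := ht κ
    show g * x.1 (tw κ) * g⁻¹ = _
    rw [this]
    show _ = (g * t * g⁻¹) * (g * x.1 κ * g⁻¹) * (g * t * g⁻¹)⁻¹
    group⟩
  one_smul x := by
    apply Subtype.ext
    ext κ
    show 1 * x.1 κ * 1⁻¹ = x.1 κ
    group
  mul_smul g h x := by
    apply Subtype.ext
    ext κ
    show (g * h) * x.1 κ * (g * h)⁻¹ = g * (h * x.1 κ * h⁻¹) * g⁻¹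
    group

lemma smul_XX_apply (g : G) (x : XX n k G) (κ : ↥(KK n k)) :
    (g • x).1 κ = g * x.1 κ * g⁻¹ := rfl

/-- compatible pairs are equivalent to (twistable hom, stabilizing element) pairs. -/
noncomputable def e3 : PP n k G ≃ {q : XX n k G × G // q.2 • q.1 = q.1} where
  toFun p :=
    let x : XX n k G := ⟨p.1.1, ⟨p.1.2, p.2⟩⟩
    ⟨(x, (Classical.choose x.2)⁻¹ * p.1.2), by
      apply Subtype.ext
      ext κ
      have ht : Compat p.1.1 p.1.2 := p.2
      have ht0 : Compat p.1.1 (Classical.choose x.2) := Classical.choose_spec x.2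
      show (Classical.choose x.2)⁻¹ * p.1.2 * p.1.1 κ
          * ((Classical.choose x.2)⁻¹ * p.1.2)⁻¹ = p.1.1 κ
      have h1 : p.1.2 * p.1.1 κ * p.1.2⁻¹ = Classical.choose x.2 * p.1.1 κ
          * (Classical.choose x.2)⁻¹ := by rw [← ht κ, ← ht0 κ]
      calc (Classical.choose x.2)⁻¹ * p.1.2 * p.1.1 κ * ((Classical.choose x.2)⁻¹ * p.1.2)⁻¹
          = (Classical.choose x.2)⁻¹ * (p.1.2 * p.1.1 κ * p.1.2⁻¹) * Classical.choose x.2 := by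
            group
        _ = (Classical.choose x.2)⁻¹ * (Classical.choose x.2 * p.1.1 κ
              * (Classical.choose x.2)⁻¹) * Classical.choose x.2 := by rw [h1]
        _ = p.1.1 κ := by group⟩
  invFun q := ⟨(q.1.1.1, Classical.choose q.1.1.2 * q.1.2), by
    intro κ
    have ht0 : Compat q.1.1.1 (Classical.choose q.1.1.2) := Classical.choose_spec q.1.1.2
    have hz : q.1.2 * q.1.1.1 κ * q.1.2⁻¹ = q.1.1.1 κ := by
      have := congrArg (fun (y : XX n k G) => y.1 κ) q.2
      simpa [smul_XX_apply] using this
    rw [ht0 κ]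
    calc Classical.choose q.1.1.2 * q.1.1.1 κ * (Classical.choose q.1.1.2)⁻¹
        = Classical.choose q.1.1.2 * (q.1.2 * q.1.1.1 κ * q.1.2⁻¹)
          * (Classical.choose q.1.1.2)⁻¹ := by rw [hz]
      _ = Classical.choose q.1.1.2 * q.1.2 * q.1.1.1 κ
          * (Classical.choose q.1.1.2 * q.1.2)⁻¹ := by group⟩
  left_inv p := by
    apply Subtype.ext
    apply Prod.ext
    · rfl
    · show Classical.choose _ * ((Classical.choose _)⁻¹ * p.1.2) = p.1.2
      group
  right_inv q := by
    apply Subtype.ext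
    apply Prod.ext
    · apply Subtype.ext; rfl
    · show (Classical.choose _)⁻¹ * (Classical.choose _ * q.1.2) = q.1.2
      group

noncomputable def e4 : {q : XX n k G × G // q.2 • q.1 = q.1}
    ≃ Σ g : G, MulAction.fixedBy (XX n k G) g :=
  ((Equiv.prodComm _ _).subtypeEquiv fun _ => Iff.rfl).trans
    (Equiv.subtypeProdEquivSigmaSubtype fun (g : G) (x : XX n k G) => x ∈ MulAction.fixedBy _ g)

/-- the main equivalence: tuples with equal k-th powers ≃ hom set. -/
noncomputable def e1 : (Gam n k →* G) ≃ {v : Fin (n + 1) → G // ∀ i j, v i ^ k = v j ^ k} where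
  toFun ρ := ⟨fun i => ρ (of i), fun i j => by
    rw [← map_pow, ← map_pow, of_pow_eq]⟩
  invFun v := toGroup (f := fun i => v.1 i) (by
    rintro r ⟨⟨i, j⟩, rfl⟩
    rw [map_mul, map_inv, map_pow, map_pow, FreeGroup.lift_apply_of, FreeGroup.lift_apply_of, v.2 i j,
      mul_inv_cancel])
  left_inv ρ := by
    apply (PresentedGroup.ext fun i => ?_)
    rw [toGroup.of]
  right_inv v := by
    apply Subtype.ext
    funext i
    exact toGroup.of _

end Work

end Stmt7

theorem stmt_7 (G : Type*) [Group G] [Fintype G] (k n : ℕ) (hk : 0 < k) (hn : 0 < n) :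
    Nat.card G ∣ Nat.card {v : Fin n → G // ∀ i j, (v i) ^ k = (v j) ^ k} := by
  obtain ⟨m, rfl⟩ : ∃ m, n = m + 1 := ⟨n - 1, (Nat.succ_pred_eq_of_pos hn).symm⟩
  classical
  have E : {v : Fin (m + 1) → G // ∀ i j, (v i) ^ k = (v j) ^ k}
      ≃ (Quotient (MulAction.orbitRel G (Stmt7.XX m k G))) × G :=
    (Stmt7.e1 (n := m) (k := k) (G := G)).symm.trans
      ((Stmt7.e2).trans ((Stmt7.e3).trans ((Stmt7.e4).trans
        (MulAction.sigmaFixedByEquivOrbitsProdGroup G (Stmt7.XX m k G)))))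
  rw [Nat.card_congr E, Nat.card_prod]
  exact Dvd.intro_left _ rfl
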